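/- For every integer q ≥ 3, there exists a 5-coloring ψ of the 3-element subsets of a (16q)-element vertex set with colors {1, 2, 3, 4, 5} such that: there is no 5-element vertex set all but at most one of whose 3-element subsets receive color 1; there is no 5-element vertex set all of whose 3-element subsets receive color 2; there is no 5-element vertex set all of whose 3-element subsets receive color 3; there is no 5-element vertex set all of whose 3-element subsets receive color 4; and there is no (q+1)-element vertex set all but at most one of whose 3-element subsets receive color 5. Consequently, R(K_5^{(3)} − e, K_5^{(3)}, K_5^{(3)}, K_5^{(3)}, K_{q+1}^{(3)} − e; 3) > 16q. -/

import Mathlib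

/-- The coloring `χ` of subsets of a `p`-element vertex set contains a
monochromatic complete `r`-uniform `K_m^{(r)}` in color `i`: an `m`-element
vertex set all of whose `r`-element subsets receive color `i`. -/
def HasMonoClique {C : Type} (p : ℕ) (χ : Finset (Fin p) → C) (r : ℕ)
    (i : C) (m : ℕ) : Prop :=
  ∃ S : Finset (Fin p), S.card = m ∧
    ∀ e : Finset (Fin p), e ⊆ S → e.card = r → χ e = i

/-- The coloring `ψ` of 3-element subsets contains a copy of `K_m^{(3)} - e` in
color `i`: an `m`-element vertex set all but at most one of whose 3-element
subsets receive color `i`. -/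
def HasCliqueMinusEdge {C : Type} [DecidableEq C] (p : ℕ)
    (ψ : Finset (Fin p) → C) (i : C) (m : ℕ) : Prop :=
  ∃ S : Finset (Fin p), S.card = m ∧
    ((S.powersetCard 3).filter (fun e => ψ e ≠ i)).card ≤ 1

/-- The 5-color hypergraph Ramsey number
`R(K_5^{(3)} - e, K_5^{(3)}, K_5^{(3)}, K_5^{(3)}, K_{q+1}^{(3)} - e; 3)`. -/
noncomputable def RHyp5 (q : ℕ) : ℕ :=
  sInf {p | 0 < p ∧ ∀ ψ : Finset (Fin p) → Fin 5,
    HasCliqueMinusEdge p ψ 0 5 ∨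
      HasMonoClique p ψ 3 1 5 ∨
        HasMonoClique p ψ 3 2 5 ∨
          HasMonoClique p ψ 3 3 5 ∨
            HasCliqueMinusEdge p ψ 4 (q + 1)}




def cls : Fin 16 → Fin 3 := ![0,0,1,1,2,2,2,1,0,2,0,1,0,1,2,0]

def ec (a b : Fin 16) : Fin 3 :=
  cls ⟨a.val ^^^ b.val, Nat.xor_lt_two_pow (n := 4) a.isLt b.isLt⟩

theorem ec_tf : ∀ a b c : Fin 16, a ≠ b → a ≠ c → b ≠ c →
    ¬ (ec a b = ec b c ∧ ec a c = ec b c) := by decide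

/-- embedding of the three "middle" colors into `Fin 5`. -/
def emb3 (j : Fin 3) : Fin 5 := ⟨j.val + 1, by omega⟩

theorem emb3_injective : Function.Injective emb3 := by
  intro a b h
  simp only [emb3, Fin.mk.injEq] at h
  exact Fin.val_injective (by omega)

theorem emb3_ne_zero (j : Fin 3) : emb3 j ≠ 0 := by
  simp only [emb3]; intro h; rw [Fin.ext_iff] at h; simp at h

theorem emb3_ne_four (j : Fin 3) : emb3 j ≠ 4 := by
  simp only [emb3]; intro h; rw [Fin.ext_iff] at h
  simp at h; omega

/-- the group of a vertex -/
def grp (q : ℕ) (v : Fin (16 * q)) : Fin 16 :=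
  ⟨v.val / q, by
    rcases Nat.eq_zero_or_pos q with h | h
    · exact absurd v.isLt (by omega)
    · rw [Nat.div_lt_iff_lt_mul h]; omega⟩

/-- the smallest element of a finset of `Fin 16` (junk value `0` if empty) -/
def min1 (G : Finset (Fin 16)) : Fin 16 := WithTop.untopD 0 G.min

/-- the second smallest element -/
def min2 (G : Finset (Fin 16)) : Fin 16 := WithTop.untopD 0 (G.erase (min1 G)).min

theorem min1_eq {G : Finset (Fin 16)} {a : Fin 16} (ha : a ∈ G)
    (hmin : ∀ x ∈ G, a ≤ x) : min1 G = a := by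
  have hne : G.Nonempty := ⟨a, ha⟩
  have h1 : min1 G = G.min' hne := by
    rw [min1, ← Finset.coe_min' hne, WithTop.untopD_coe]
  rw [h1]
  exact le_antisymm (Finset.min'_le _ _ ha) (Finset.le_min' _ _ _ hmin)

theorem min2_eq {G : Finset (Fin 16)} {a b : Fin 16} (hab : a < b)
    (ha : a ∈ G) (hb : b ∈ G) (hmin : ∀ x ∈ G, a ≤ x)
    (hmin2 : ∀ x ∈ G, x ≠ a → b ≤ x) : min2 G = b := by
  rw [min2, min1_eq ha hmin]
  apply min1_eq (Finset.mem_erase.mpr ⟨hab.ne', hb⟩)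
  intro y hy
  rcases Finset.mem_erase.mp hy with ⟨hy1, hy2⟩
  exact hmin2 y hy2 hy1

/-- the coloring -/
def psi (q : ℕ) (e : Finset (Fin (16 * q))) : Fin 5 :=
  if 2 ≤ (e.image (grp q)).card then
    emb3 (ec (min1 (e.image (grp q))) (min2 (e.image (grp q))))
  else 4

theorem psi_ne_zero (q : ℕ) (e : Finset (Fin (16 * q))) : psi q e ≠ 0 := by
  unfold psi
  split
  · exact emb3_ne_zero _
  · decide

theorem psi_eq_four (q : ℕ) (e : Finset (Fin (16 * q)))
    (h : (e.image (grp q)).card ≤ 1) : psi q e = 4 := by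
  unfold psi
  rw [if_neg (by omega)]

theorem psi_ne_four (q : ℕ) (e : Finset (Fin (16 * q)))
    (h : 2 ≤ (e.image (grp q)).card) : psi q e ≠ 4 := by
  unfold psi
  rw [if_pos h]
  exact emb3_ne_four _

/-- key computation: if `a < b` are the two smallest elements of the image,
then `psi` is `emb3 (ec a b)`. -/
theorem psi_spec (q : ℕ) (e : Finset (Fin (16 * q))) (a b : Fin 16)
    (hab : a < b) (ha : a ∈ e.image (grp q)) (hb : b ∈ e.image (grp q))
    (hmin1 : ∀ x ∈ e.image (grp q), a ≤ x)
    (hmin2 : ∀ x ∈ e.image (grp q), x ≠ a → b ≤ x) :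
    psi q e = emb3 (ec a b) := by
  have h2 : 2 ≤ (e.image (grp q)).card := by
    have hs : ({a, b} : Finset (Fin 16)) ⊆ e.image (grp q) := by
      intro x hx
      rcases Finset.mem_insert.mp hx with rfl | hx
      · exact ha
      · rw [Finset.mem_singleton] at hx; subst hx; exact hb
    calc 2 = ({a, b} : Finset (Fin 16)).card := by
            rw [Finset.card_insert_of_notMem (by simp [hab.ne]), Finset.card_singleton]
      _ ≤ _ := Finset.card_le_card hs
  unfold psi
  rw [if_pos h2, min1_eq ha hmin1, min2_eq hab ha hb hmin1 hmin2]

theorem no_color0 (q : ℕ) : ¬ HasCliqueMinusEdge (16 * q) (psi q) 0 5 := by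
  rintro ⟨S, hS, hfil⟩
  rw [Finset.filter_true_of_mem (fun e _ => psi_ne_zero q e)] at hfil
  rw [Finset.card_powersetCard, hS] at hfil
  exact absurd hfil (by decide)

theorem no_color4 (q : ℕ) (hq : 3 ≤ q) :
    ¬ HasCliqueMinusEdge (16 * q) (psi q) 4 (q + 1) := by
  rintro ⟨S, hS, hfil⟩
  -- two vertices in different groups
  have hex : ∃ u ∈ S, ∃ v ∈ S, grp q u ≠ grp q v := by
    by_contra hcon
    push_neg at hcon
    obtain ⟨u0, hu0⟩ : S.Nonempty := Finset.card_pos.mp (by omega)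
    have hinj : Set.InjOn (fun v : Fin (16 * q) => v.val % q) S := by
      intro x hx y hy hxy
      have h1 : grp q x = grp q y := (hcon x hx u0 hu0).trans (hcon y hy u0 hu0).symm
      have h2 : x.val / q = y.val / q := congrArg Fin.val h1
      have hxy' : x.val % q = y.val % q := hxy
      have hx := Nat.div_add_mod x.val q
      have hy := Nat.div_add_mod y.val q
      rw [h2] at hx
      exact Fin.val_injective (by omega)
    have hmaps : ∀ v ∈ S, v.val % q ∈ Finset.range q := by
      intro v _
      exact Finset.mem_range.mpr (Nat.mod_lt _ (by omega))
    have := Finset.card_le_card_of_injOn _ hmaps hinj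
    rw [hS, Finset.card_range] at this
    omega
  obtain ⟨u, hu, v, hv, huv⟩ := hex
  have huvne : u ≠ v := fun h => huv (by rw [h])
  -- two more vertices
  have hcard2 : 2 ≤ ((S.erase u).erase v).card := by
    have h1 := Finset.card_erase_of_mem hu
    have h2 := Finset.card_erase_of_mem (Finset.mem_erase.mpr ⟨(Ne.symm huvne), hv⟩)
    omega
  obtain ⟨w1, hw1, w2, hw2, hww⟩ := Finset.one_lt_card.mp hcard2
  have hw1S : w1 ∈ S := Finset.mem_of_mem_erase (Finset.mem_of_mem_erase hw1)
  have hw2S : w2 ∈ S := Finset.mem_of_mem_erase (Finset.mem_of_mem_erase hw2)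
  have hw1u : w1 ≠ u := Finset.ne_of_mem_erase (Finset.mem_of_mem_erase hw1)
  have hw1v : w1 ≠ v := Finset.ne_of_mem_erase hw1
  have hw2u : w2 ≠ u := Finset.ne_of_mem_erase (Finset.mem_of_mem_erase hw2)
  have hw2v : w2 ≠ v := Finset.ne_of_mem_erase hw2
  -- the triples {u,v,w1} and {u,v,w2}
  have key : ∀ w : Fin (16 * q), w ∈ S → w ≠ u → w ≠ v →
      ({u, v, w} : Finset (Fin (16 * q))) ∈
        (S.powersetCard 3).filter (fun e => psi q e ≠ 4) := by
    intro w hwS hwu hwv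
    rw [Finset.mem_filter, Finset.mem_powersetCard]
    refine ⟨⟨?_, ?_⟩, ?_⟩
    · intro x hx
      simp only [Finset.mem_insert, Finset.mem_singleton] at hx
      rcases hx with rfl | rfl | rfl <;> assumption
    · rw [Finset.card_insert_of_notMem (by simp [huvne, hwu.symm]),
        Finset.card_insert_of_notMem (by simp [hwv.symm]), Finset.card_singleton]
    · apply psi_ne_four
      have h1 : grp q u ∈ ({u, v, w} : Finset _).image (grp q) :=
        Finset.mem_image_of_mem _ (by simp)
      have h2 : grp q v ∈ ({u, v, w} : Finset _).image (grp q) :=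
        Finset.mem_image_of_mem _ (by simp)
      have : ({grp q u, grp q v} : Finset (Fin 16)) ⊆
          Finset.image (grp q) {u, v, w} := by
        intro x hx
        rcases Finset.mem_insert.mp hx with rfl | hx
        · exact h1
        · rw [Finset.mem_singleton] at hx; subst hx; exact h2
      calc 2 = ({grp q u, grp q v} : Finset (Fin 16)).card := by
              rw [Finset.card_insert_of_notMem (by simp [huv]), Finset.card_singleton]
        _ ≤ _ := Finset.card_le_card this
  have he1 := key w1 hw1S hw1u hw1v
  have he2 := key w2 hw2S hw2u hw2v
  have hne : ({u, v, w1} : Finset (Fin (16 * q))) ≠ {u, v, w2} := by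
    intro h
    have : w1 ∈ ({u, v, w2} : Finset (Fin (16 * q))) := by
      rw [← h]; simp
    simp only [Finset.mem_insert, Finset.mem_singleton] at this
    rcases this with h | h | h
    · exact hw1u h
    · exact hw1v h
    · exact hww h
  have : 2 ≤ ((S.powersetCard 3).filter (fun e => psi q e ≠ 4)).card :=
    Finset.one_lt_card.mpr ⟨_, he1, _, he2, hne⟩
  omega

theorem no_mono (q : ℕ) (j : Fin 3) :
    ¬ HasMonoClique (16 * q) (psi q) 3 (emb3 j) 5 := by
  rintro ⟨S, hS, hmono⟩
  -- Step 1: every group contains at most 2 vertices of S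
  have hfib : ∀ g : Fin 16, (S.filter (fun v => grp q v = g)).card ≤ 2 := by
    intro g
    by_contra hcon
    push_neg at hcon
    obtain ⟨e, he1, he2⟩ := Finset.exists_subset_card_eq
      (s := S.filter (fun v => grp q v = g)) (n := 3) (by omega)
    have heS : e ⊆ S := he1.trans (Finset.filter_subset _ _)
    have h4 : psi q e = 4 := by
      apply psi_eq_four
      have : e.image (grp q) ⊆ {g} := by
        intro x hx
        obtain ⟨v, hv, rfl⟩ := Finset.mem_image.mp hx
        exact Finset.mem_singleton.mpr (Finset.mem_filter.mp (he1 hv)).2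
      calc (e.image (grp q)).card ≤ ({g} : Finset (Fin 16)).card :=
            Finset.card_le_card this
        _ = 1 := Finset.card_singleton g
    have h5 := hmono e heS he2
    rw [h4] at h5
    exact emb3_ne_four j h5.symm
  -- Step 2: S meets at least 3 groups
  set T := S.image (grp q) with hT
  have h52 : S.card ≤ 2 * T.card :=
    Finset.card_le_mul_card_image S 2 (fun a _ => hfib a)
  have hT3 : 3 ≤ T.card := by omega
  -- Step 3: the three smallest groups
  have hne1 : T.Nonempty := Finset.card_pos.mp (by omega)
  set t1 := T.min' hne1 with ht1def
  have ht1T : t1 ∈ T := T.min'_mem hne1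
  have ht1min : ∀ x ∈ T, t1 ≤ x := fun x hx => T.min'_le x hx
  have hne2 : (T.erase t1).Nonempty := by
    apply Finset.card_pos.mp
    rw [Finset.card_erase_of_mem ht1T]; omega
  set t2 := (T.erase t1).min' hne2 with ht2def
  have ht2e : t2 ∈ T.erase t1 := (T.erase t1).min'_mem hne2
  have ht2T : t2 ∈ T := Finset.mem_of_mem_erase ht2e
  have ht2ne : t2 ≠ t1 := Finset.ne_of_mem_erase ht2e
  have ht2min : ∀ x ∈ T, x ≠ t1 → t2 ≤ x := fun x hx hxne =>
    Finset.min'_le _ x (Finset.mem_erase.mpr ⟨hxne, hx⟩)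
  have hne3 : ((T.erase t1).erase t2).Nonempty := by
    apply Finset.card_pos.mp
    rw [Finset.card_erase_of_mem ht2e, Finset.card_erase_of_mem ht1T]; omega
  set t3 := ((T.erase t1).erase t2).min' hne3 with ht3def
  have ht3e : t3 ∈ (T.erase t1).erase t2 := Finset.min'_mem _ hne3
  have ht3T : t3 ∈ T := Finset.mem_of_mem_erase (Finset.mem_of_mem_erase ht3e)
  have ht3ne2 : t3 ≠ t2 := Finset.ne_of_mem_erase ht3e
  have ht3ne1 : t3 ≠ t1 := Finset.ne_of_mem_erase (Finset.mem_of_mem_erase ht3e)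
  have ht3min : ∀ x ∈ T, x ≠ t1 → x ≠ t2 → t3 ≤ x := fun x hx h1 h2 =>
    Finset.min'_le _ x (Finset.mem_erase.mpr ⟨h2, Finset.mem_erase.mpr ⟨h1, hx⟩⟩)
  have h12 : t1 < t2 := lt_of_le_of_ne (ht1min t2 ht2T) (Ne.symm ht2ne)
  have h23 : t2 < t3 := lt_of_le_of_ne (ht2min t3 ht3T ht3ne1) (Ne.symm ht3ne2)
  have h13 : t1 < t3 := h12.trans h23
  -- representatives
  obtain ⟨u1, hu1S, hu1⟩ := Finset.mem_image.mp ht1T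
  obtain ⟨u2, hu2S, hu2⟩ := Finset.mem_image.mp ht2T
  obtain ⟨u3, hu3S, hu3⟩ := Finset.mem_image.mp ht3T
  -- generic pair lemma
  have pair : ∀ (a b : Fin 16) (ua ub w : Fin (16 * q)),
      ua ∈ S → ub ∈ S → w ∈ S → grp q ua = a → grp q ub = b → a < b →
      w ≠ ua → w ≠ ub →
      (∀ x ∈ ({a, b, grp q w} : Finset (Fin 16)), a ≤ x) →
      (∀ x ∈ ({a, b, grp q w} : Finset (Fin 16)), x ≠ a → b ≤ x) →
      ec a b = j := by
    intro a b ua ub w huaS hubS hwS hga hgb hab hwua hwub hmina hminb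
    have huaub : ua ≠ ub := by
      intro h; rw [h, hgb] at hga; exact absurd hga hab.ne'
    set e : Finset (Fin (16 * q)) := {ua, ub, w} with hedef
    have heS : e ⊆ S := by
      intro x hx
      simp only [hedef, Finset.mem_insert, Finset.mem_singleton] at hx
      rcases hx with rfl | rfl | rfl <;> assumption
    have hecard : e.card = 3 := by
      rw [hedef, Finset.card_insert_of_notMem (by simp [huaub, hwua.symm]),
        Finset.card_insert_of_notMem (by simp [hwub.symm]), Finset.card_singleton]
    have himg : e.image (grp q) = {a, b, grp q w} := by
      rw [hedef]
      simp [Finset.image_insert, hga, hgb]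
    have hspec := psi_spec q e a b hab
      (himg ▸ (by simp : a ∈ ({a, b, grp q w} : Finset (Fin 16))))
      (himg ▸ (by simp : b ∈ ({a, b, grp q w} : Finset (Fin 16))))
      (by rw [himg]; exact hmina) (by rw [himg]; exact hminb)
    have := hmono e heS hecard
    rw [hspec] at this
    exact emb3_injective this
  -- membership of groups of elements of S
  have hgT : ∀ w ∈ S, grp q w ∈ T := fun w hw => Finset.mem_image_of_mem _ hw
  -- (1) ec t1 t2 = j
  have e12 : ec t1 t2 = j := by
    have : ((S.erase u1).erase u2).Nonempty := by
      apply Finset.card_pos.mp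
      rw [Finset.card_erase_of_mem (Finset.mem_erase.mpr ⟨?_, hu2S⟩),
        Finset.card_erase_of_mem hu1S, hS]
      · omega
      · intro h; rw [h, hu1] at hu2; exact ht2ne hu2.symm
    obtain ⟨w, hw⟩ := this
    have hwS : w ∈ S := Finset.mem_of_mem_erase (Finset.mem_of_mem_erase hw)
    refine pair t1 t2 u1 u2 w hu1S hu2S hwS hu1 hu2 h12
      (Finset.ne_of_mem_erase (Finset.mem_of_mem_erase hw))
      (Finset.ne_of_mem_erase hw) ?_ ?_
    · intro x hx
      simp only [Finset.mem_insert, Finset.mem_singleton] at hx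
      rcases hx with rfl | rfl | rfl
      · exact le_refl _
      · exact h12.le
      · exact ht1min _ (hgT w hwS)
    · intro x hx hxne
      simp only [Finset.mem_insert, Finset.mem_singleton] at hx
      rcases hx with rfl | rfl | rfl
      · exact absurd rfl hxne
      · exact le_refl _
      · exact ht2min _ (hgT w hwS) hxne
  -- (2) ec t2 t3 = j
  have e23 : ec t2 t3 = j := by
    have hu2u3 : u2 ≠ u3 := by
      intro h; rw [h, hu3] at hu2; exact ht3ne2 hu2
    have hW : ∃ w ∈ (S.erase u2).erase u3, grp q w ≠ t1 := by
      by_contra hcon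
      push_neg at hcon
      have hsub : (S.erase u2).erase u3 ⊆ S.filter (fun v => grp q v = t1) := by
        intro x hx
        exact Finset.mem_filter.mpr
          ⟨Finset.mem_of_mem_erase (Finset.mem_of_mem_erase hx), hcon x hx⟩
      have h3 : ((S.erase u2).erase u3).card = 3 := by
        rw [Finset.card_erase_of_mem (Finset.mem_erase.mpr ⟨hu2u3.symm, hu3S⟩),
          Finset.card_erase_of_mem hu2S, hS]
      have := Finset.card_le_card hsub
      have := hfib t1
      omega
    obtain ⟨w, hw, hwg⟩ := hW
    have hwS : w ∈ S := Finset.mem_of_mem_erase (Finset.mem_of_mem_erase hw)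
    refine pair t2 t3 u2 u3 w hu2S hu3S hwS hu2 hu3 h23
      (Finset.ne_of_mem_erase (Finset.mem_of_mem_erase hw))
      (Finset.ne_of_mem_erase hw) ?_ ?_
    · intro x hx
      simp only [Finset.mem_insert, Finset.mem_singleton] at hx
      rcases hx with rfl | rfl | rfl
      · exact le_refl _
      · exact h23.le
      · exact ht2min _ (hgT w hwS) hwg
    · intro x hx hxne
      simp only [Finset.mem_insert, Finset.mem_singleton] at hx
      rcases hx with rfl | rfl | rfl
      · exact absurd rfl hxne
      · exact le_refl _
      · exact ht3min _ (hgT w hwS) hwg hxne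
  -- (3) ec t1 t3 = j
  have e13 : ec t1 t3 = j := by
    have hu1u3 : u1 ≠ u3 := by
      intro h; rw [h, hu3] at hu1; exact ht3ne1 hu1
    have hW : ∃ w ∈ (S.erase u1).erase u3, grp q w ≠ t2 := by
      by_contra hcon
      push_neg at hcon
      have hsub : (S.erase u1).erase u3 ⊆ S.filter (fun v => grp q v = t2) := by
        intro x hx
        exact Finset.mem_filter.mpr
          ⟨Finset.mem_of_mem_erase (Finset.mem_of_mem_erase hx), hcon x hx⟩
      have h3 : ((S.erase u1).erase u3).card = 3 := by
        rw [Finset.card_erase_of_mem (Finset.mem_erase.mpr ⟨hu1u3.symm, hu3S⟩),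
          Finset.card_erase_of_mem hu1S, hS]
      have := Finset.card_le_card hsub
      have := hfib t2
      omega
    obtain ⟨w, hw, hwg⟩ := hW
    have hwS : w ∈ S := Finset.mem_of_mem_erase (Finset.mem_of_mem_erase hw)
    refine pair t1 t3 u1 u3 w hu1S hu3S hwS hu1 hu3 h13
      (Finset.ne_of_mem_erase (Finset.mem_of_mem_erase hw))
      (Finset.ne_of_mem_erase hw) ?_ ?_
    · intro x hx
      simp only [Finset.mem_insert, Finset.mem_singleton] at hx
      rcases hx with rfl | rfl | rfl
      · exact le_refl _
      · exact h13.le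
      · exact ht1min _ (hgT w hwS)
    · intro x hx hxne
      simp only [Finset.mem_insert, Finset.mem_singleton] at hx
      rcases hx with rfl | rfl | rfl
      · exact absurd rfl hxne
      · exact le_refl _
      · exact ht3min _ (hgT w hwS) hxne hwg
  exact ec_tf t1 t2 t3 h12.ne h13.ne h23.ne ⟨e12.trans e23.symm, e13.trans e23.symm⟩


def RamM : ℕ → ℕ
  | 0 => 0
  | L + 1 => 5 * RamM L + 1

theorem graph_seq (p : ℕ) (χ2 : Finset (Fin p) → Fin 5) :
    ∀ (L : ℕ) (X : Finset (Fin p)), RamM L ≤ X.card →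
    ∃ (v : Fin L → Fin p) (c : Fin L → Fin 5),
      (∀ i, v i ∈ X) ∧ Function.Injective v ∧
      ∀ i j : Fin L, i < j → χ2 {v i, v j} = c i := by
  intro L
  induction L with
  | zero =>
    intro X _
    exact ⟨Fin.elim0, Fin.elim0, fun i => i.elim0, fun i => i.elim0,
      fun i => i.elim0⟩
  | succ L ih =>
    intro X hX
    rw [show RamM (L + 1) = 5 * RamM L + 1 from rfl] at hX
    obtain ⟨a, ha⟩ : X.Nonempty := Finset.card_pos.mp (by omega)
    obtain ⟨c0, -, hc0⟩ :=
      Finset.exists_le_card_fiber_of_mul_le_card_of_maps_to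
        (s := X.erase a) (t := (Finset.univ : Finset (Fin 5)))
        (f := fun u => χ2 {a, u}) (n := RamM L)
        (fun _ _ => Finset.mem_univ _) Finset.univ_nonempty
        (by
          rw [Finset.card_univ, Fintype.card_fin, Finset.card_erase_of_mem ha]
          omega)
    set Y := (X.erase a).filter (fun u => χ2 {a, u} = c0) with hY
    obtain ⟨v', c', hmem, hinj, hcol⟩ := ih Y hc0
    have hYX : Y ⊆ X := (Finset.filter_subset _ _).trans (Finset.erase_subset _ _)
    refine ⟨Fin.cons a v', Fin.cons c0 c', ?_, ?_, ?_⟩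
    · intro i
      refine Fin.cases ?_ ?_ i
      · exact ha
      · intro i'
        simp only [Fin.cons_succ]
        exact hYX (hmem i')
    · rw [Fin.cons_injective_iff]
      refine ⟨?_, hinj⟩
      rintro ⟨i, hi⟩
      have : v' i ∈ X.erase a := Finset.filter_subset _ _ (hmem i)
      exact Finset.ne_of_mem_erase this hi
    · intro i j
      refine Fin.cases ?_ ?_ i
      · intro hij
        have hj0 : j ≠ 0 := by
          intro h; subst h; exact absurd hij (by simp)
        obtain ⟨j', rfl⟩ := Fin.exists_succ_eq_of_ne_zero hj0
        simp only [Fin.cons_zero, Fin.cons_succ]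
        exact (Finset.mem_filter.mp (hmem j')).2
      · intro i' hij
        have hj0 : j ≠ 0 := by
          intro h; subst h
          exact absurd hij (by
            rw [Fin.lt_def]; simp)
        obtain ⟨j', rfl⟩ := Fin.exists_succ_eq_of_ne_zero hj0
        simp only [Fin.cons_succ]
        exact hcol i' j' (by rwa [Fin.succ_lt_succ_iff] at hij)

theorem graph_clique (p m : ℕ) (χ2 : Finset (Fin p) → Fin 5)
    (X : Finset (Fin p)) (hX : RamM (5 * m) ≤ X.card) :
    ∃ (Y : Finset (Fin p)) (col : Fin 5), Y ⊆ X ∧ Y.card = m ∧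
      ∀ u ∈ Y, ∀ w ∈ Y, u ≠ w → χ2 {u, w} = col := by
  obtain ⟨v, c, hmem, hinj, hcol⟩ := graph_seq p χ2 (5 * m) X hX
  obtain ⟨col, -, hcolm⟩ :=
    Finset.exists_le_card_fiber_of_mul_le_card_of_maps_to
      (s := (Finset.univ : Finset (Fin (5 * m))))
      (t := (Finset.univ : Finset (Fin 5))) (f := c) (n := m)
      (fun _ _ => Finset.mem_univ _) Finset.univ_nonempty
      (by simp [Finset.card_univ])
  obtain ⟨I, hI, hIcard⟩ := Finset.exists_subset_card_eq hcolm
  refine ⟨I.image v, col, ?_, ?_, ?_⟩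
  · intro x hx
    obtain ⟨i, -, rfl⟩ := Finset.mem_image.mp hx
    exact hmem i
  · rw [Finset.card_image_of_injective _ hinj, hIcard]
  · intro u hu w hw huw
    obtain ⟨i, hiI, rfl⟩ := Finset.mem_image.mp hu
    obtain ⟨k, hkI, rfl⟩ := Finset.mem_image.mp hw
    have hci : c i = col := (Finset.mem_filter.mp (hI hiI)).2
    have hck : c k = col := (Finset.mem_filter.mp (hI hkI)).2
    rcases lt_trichotomy i k with h | h | h
    · rw [hcol i k h, hci]
    · exact absurd (congrArg v h) huw
    · rw [Finset.pair_comm, hcol k i h, hck]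

def RamN : ℕ → ℕ
  | 0 => 0
  | L + 1 => RamM (5 * RamN L) + 1

theorem hyper_seq (p : ℕ) (χ3 : Finset (Fin p) → Fin 5) :
    ∀ (L : ℕ) (X : Finset (Fin p)), RamN L ≤ X.card →
    ∃ (v : Fin L → Fin p) (c : Fin L → Fin 5),
      (∀ i, v i ∈ X) ∧ Function.Injective v ∧
      ∀ i j k : Fin L, i < j → j < k → χ3 {v i, v j, v k} = c i := by
  intro L
  induction L with
  | zero =>
    intro X _
    exact ⟨Fin.elim0, Fin.elim0, fun i => i.elim0, fun i => i.elim0,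
      fun i => i.elim0⟩
  | succ L ih =>
    intro X hX
    rw [show RamN (L + 1) = RamM (5 * RamN L) + 1 from rfl] at hX
    obtain ⟨a, ha⟩ : X.Nonempty := Finset.card_pos.mp (by omega)
    obtain ⟨Y, col, hYX, hYcard, hYmono⟩ :=
      graph_clique p (RamN L) (fun e => χ3 (insert a e)) (X.erase a)
        (by rw [Finset.card_erase_of_mem ha]; omega)
    obtain ⟨v', c', hmem, hinj, hcol⟩ := ih Y (le_of_eq hYcard.symm)
    have hYX' : Y ⊆ X := hYX.trans (Finset.erase_subset _ _)
    refine ⟨Fin.cons a v', Fin.cons col c', ?_, ?_, ?_⟩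
    · intro i
      refine Fin.cases ?_ ?_ i
      · exact ha
      · intro i'
        simp only [Fin.cons_succ]
        exact hYX' (hmem i')
    · rw [Fin.cons_injective_iff]
      refine ⟨?_, hinj⟩
      rintro ⟨i, hi⟩
      exact Finset.ne_of_mem_erase (hYX (hmem i)) hi
    · intro i j k
      refine Fin.cases ?_ ?_ i
      · intro hij hjk
        have hj0 : j ≠ 0 := by
          intro h; subst h; exact absurd hij (by simp)
        obtain ⟨j', rfl⟩ := Fin.exists_succ_eq_of_ne_zero hj0
        have hk0 : k ≠ 0 := by
          intro h; subst h; exact absurd hjk (by rw [Fin.lt_def]; simp)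
        obtain ⟨k', rfl⟩ := Fin.exists_succ_eq_of_ne_zero hk0
        simp only [Fin.cons_zero, Fin.cons_succ]
        have hne : v' j' ≠ v' k' := by
          intro h
          have : j' = k' := hinj h
          subst this
          exact absurd hjk (lt_irrefl _)
        exact hYmono (v' j') (hmem j') (v' k') (hmem k') hne
      · intro i' hij hjk
        have hj0 : j ≠ 0 := by
          intro h; subst h; exact absurd hij (by rw [Fin.lt_def]; simp)
        obtain ⟨j', rfl⟩ := Fin.exists_succ_eq_of_ne_zero hj0
        have hk0 : k ≠ 0 := by
          intro h; subst h; exact absurd hjk (by rw [Fin.lt_def]; simp)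
        obtain ⟨k', rfl⟩ := Fin.exists_succ_eq_of_ne_zero hk0
        simp only [Fin.cons_succ]
        exact hcol i' j' k' (by rwa [Fin.succ_lt_succ_iff] at hij)
          (by rwa [Fin.succ_lt_succ_iff] at hjk)

theorem ramsey5 (m : ℕ) : ∃ P : ℕ, 0 < P ∧
    ∀ χ3 : Finset (Fin P) → Fin 5, ∃ (col : Fin 5) (S : Finset (Fin P)),
      S.card = m ∧ ∀ e ⊆ S, e.card = 3 → χ3 e = col := by
  refine ⟨RamN (5 * m) + 1, Nat.succ_pos _, ?_⟩
  intro χ3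
  obtain ⟨v, c, hmem, hinj, hcol⟩ := hyper_seq _ χ3 (5 * m) Finset.univ
    (by rw [Finset.card_univ, Fintype.card_fin]; omega)
  obtain ⟨col, -, hcolm⟩ :=
    Finset.exists_le_card_fiber_of_mul_le_card_of_maps_to
      (s := (Finset.univ : Finset (Fin (5 * m))))
      (t := (Finset.univ : Finset (Fin 5))) (f := c) (n := m)
      (fun _ _ => Finset.mem_univ _) Finset.univ_nonempty
      (by simp [Finset.card_univ])
  obtain ⟨I, hI, hIcard⟩ := Finset.exists_subset_card_eq hcolm
  have hcI : ∀ i ∈ I, c i = col := fun i hi => (Finset.mem_filter.mp (hI hi)).2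
  refine ⟨col, I.image v, ?_, ?_⟩
  · rw [Finset.card_image_of_injective _ hinj, hIcard]
  · have sorted : ∀ a b d : Fin (5 * m), a ∈ I → b ∈ I → d ∈ I →
        a < b → b < d → χ3 {v a, v b, v d} = col := by
      intro a b d haI _ _ hab hbd
      rw [hcol a b d hab hbd, hcI a haI]
    have anyord : ∀ a b d : Fin (5 * m), a ∈ I → b ∈ I → d ∈ I →
        a ≠ b → a ≠ d → b ≠ d → χ3 {v a, v b, v d} = col := by
      intro a b d haI hbI hdI hab had hbd
      have perm : ∀ x y z : Fin (RamN (5 * m) + 1),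
          ({x, y, z} : Finset (Fin (RamN (5 * m) + 1))) = {y, x, z} ∧
          ({x, y, z} : Finset (Fin (RamN (5 * m) + 1))) = {x, z, y} := by
        intro x y z
        constructor
        · exact Finset.insert_comm x y {z}
        · exact congrArg (insert x) (Finset.pair_comm y z)
      rcases lt_trichotomy a b with h1 | h1 | h1
      · rcases lt_trichotomy b d with h2 | h2 | h2
        · exact sorted a b d haI hbI hdI h1 h2
        · exact absurd h2 hbd
        · rcases lt_trichotomy a d with h3 | h3 | h3
          · rw [(perm (v a) (v b) (v d)).2]
            exact sorted a d b haI hdI hbI h3 h2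
          · exact absurd h3 had
          · rw [(perm (v a) (v b) (v d)).2, (perm (v a) (v d) (v b)).1]
            exact sorted d a b hdI haI hbI h3 h1
      · exact absurd h1 hab
      · rcases lt_trichotomy a d with h2 | h2 | h2
        · rw [(perm (v a) (v b) (v d)).1]
          exact sorted b a d hbI haI hdI h1 h2
        · exact absurd h2 had
        · rcases lt_trichotomy b d with h3 | h3 | h3
          · rw [(perm (v a) (v b) (v d)).1, (perm (v b) (v a) (v d)).2]
            exact sorted b d a hbI hdI haI h3 h2
          · exact absurd h3 hbd
          · rw [(perm (v a) (v b) (v d)).2, (perm (v a) (v d) (v b)).1,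
              (perm (v d) (v a) (v b)).2]
            exact sorted d b a hdI hbI haI h3 h1
    intro e he hecard
    obtain ⟨J, hJI, hJe⟩ := Finset.subset_image_iff.mp he
    have hJcard : J.card = 3 := by
      rw [← hJe, Finset.card_image_of_injective _ hinj] at hecard
      exact hecard
    obtain ⟨a, b, d, hab, had, hbd, rfl⟩ := Finset.card_eq_three.mp hJcard
    have : ({a, b, d} : Finset (Fin (5 * m))).image v = {v a, v b, v d} := by
      simp [Finset.image_insert]
    rw [← hJe, this]
    exact anyord a b d (hJI (by simp)) (hJI (by simp)) (hJI (by simp)) hab had hbd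


theorem pull_cme {x y : ℕ} (h : x ≤ y) (ψ : Finset (Fin y) → Fin 5)
    (i : Fin 5) (m : ℕ)
    (H : HasCliqueMinusEdge x
      (fun e => ψ (e.map (Fin.castLEEmb h))) i m) :
    HasCliqueMinusEdge y ψ i m := by
  obtain ⟨S, hS, hfil⟩ := H
  refine ⟨S.map (Fin.castLEEmb h), by rw [Finset.card_map, hS], ?_⟩
  rw [Finset.powersetCard_map, Finset.filter_map, Finset.card_map]
  simp only [Finset.mapEmbedding_apply, Function.comp_def]
  convert hfil
  rfl

theorem pull_mono {x y : ℕ} (h : x ≤ y) (ψ : Finset (Fin y) → Fin 5)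
    (i : Fin 5) (m : ℕ)
    (H : HasMonoClique x
      (fun e => ψ (e.map (Fin.castLEEmb h))) 3 i m) :
    HasMonoClique y ψ 3 i m := by
  obtain ⟨S, hS, hmono⟩ := H
  refine ⟨S.map (Fin.castLEEmb h), by rw [Finset.card_map, hS], ?_⟩
  intro e he hecard
  obtain ⟨u, hu, rfl⟩ := Finset.subset_map_iff.mp he
  rw [Finset.card_map] at hecard
  exact hmono u hu hecard

theorem upper_exists (q : ℕ) : ∃ P : ℕ, 0 < P ∧
    ∀ ψ : Finset (Fin P) → Fin 5,
      HasCliqueMinusEdge P ψ 0 5 ∨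
        HasMonoClique P ψ 3 1 5 ∨
          HasMonoClique P ψ 3 2 5 ∨
            HasMonoClique P ψ 3 3 5 ∨
              HasCliqueMinusEdge P ψ 4 (q + 1) := by
  obtain ⟨P, hP, hram⟩ := ramsey5 (max 5 (q + 1))
  refine ⟨P, hP, ?_⟩
  intro ψ
  obtain ⟨col, S, hScard, hSmono⟩ := hram ψ
  have getsub : ∀ n : ℕ, n ≤ max 5 (q + 1) →
      ∃ T ⊆ S, T.card = n := fun n hn =>
    Finset.exists_subset_card_eq (by omega)
  have cme : ∀ n : ℕ, n ≤ max 5 (q + 1) → HasCliqueMinusEdge P ψ col n := by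
    intro n hn
    obtain ⟨T, hTS, hT⟩ := getsub n hn
    refine ⟨T, hT, ?_⟩
    have : (T.powersetCard 3).filter (fun e => ψ e ≠ col) = ∅ := by
      rw [Finset.filter_eq_empty_iff]
      intro e hee
      rw [Finset.mem_powersetCard] at hee
      rw [hSmono e (hee.1.trans hTS) hee.2]
      simp
    rw [this]
    simp
  have mono : ∀ n : ℕ, n ≤ max 5 (q + 1) → HasMonoClique P ψ 3 col n := by
    intro n hn
    obtain ⟨T, hTS, hT⟩ := getsub n hn
    exact ⟨T, hT, fun e he hc => hSmono e (he.trans hTS) hc⟩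
  fin_cases col
  · exact Or.inl (cme 5 (le_max_left _ _))
  · exact Or.inr (Or.inl (mono 5 (le_max_left _ _)))
  · exact Or.inr (Or.inr (Or.inl (mono 5 (le_max_left _ _))))
  · exact Or.inr (Or.inr (Or.inr (Or.inl (mono 5 (le_max_left _ _)))))
  · exact Or.inr (Or.inr (Or.inr (Or.inr (cme (q + 1) (le_max_right _ _)))))

/-- for `q ≥ 3` there is a 5-coloring of the triples of a
`16q`-element set avoiding `K_5^{(3)} - e` in color 1, monochromatic
`K_5^{(3)}` in colors 2, 3, 4, and `K_{q+1}^{(3)} - e` in color 5;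
consequently
`R(K_5^{(3)}-e, K_5^{(3)}, K_5^{(3)}, K_5^{(3)}, K_{q+1}^{(3)}-e; 3) > 16q`. -/
theorem five_color_bound (q : ℕ) (hq : 3 ≤ q) :
    (∃ ψ : Finset (Fin (16 * q)) → Fin 5,
      ¬ HasCliqueMinusEdge (16 * q) ψ 0 5 ∧
      ¬ HasMonoClique (16 * q) ψ 3 1 5 ∧
      ¬ HasMonoClique (16 * q) ψ 3 2 5 ∧
      ¬ HasMonoClique (16 * q) ψ 3 3 5 ∧
      ¬ HasCliqueMinusEdge (16 * q) ψ 4 (q + 1)) ∧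
    16 * q < RHyp5 q := by

  have h1 : ¬ HasMonoClique (16 * q) (psi q) 3 1 5 := by
    have := no_mono q 0
    rwa [show emb3 0 = 1 from rfl] at this
  have h2 : ¬ HasMonoClique (16 * q) (psi q) 3 2 5 := by
    have := no_mono q 1
    rwa [show emb3 1 = 2 from rfl] at this
  have h3 : ¬ HasMonoClique (16 * q) (psi q) 3 3 5 := by
    have := no_mono q 2
    rwa [show emb3 2 = 3 from rfl] at this
  have h0 := no_color0 q
  have h4 := no_color4 q hq
  refine ⟨⟨psi q, h0, h1, h2, h3, h4⟩, ?_⟩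
  set A := {p | 0 < p ∧ ∀ ψ : Finset (Fin p) → Fin 5,
    HasCliqueMinusEdge p ψ 0 5 ∨
      HasMonoClique p ψ 3 1 5 ∨
        HasMonoClique p ψ 3 2 5 ∨
          HasMonoClique p ψ 3 3 5 ∨
            HasCliqueMinusEdge p ψ 4 (q + 1)} with hA
  have hAne : A.Nonempty := by
    obtain ⟨P, hP, hprop⟩ := upper_exists q
    exact ⟨P, hP, hprop⟩
  have hmem : RHyp5 q ∈ A := by
    rw [RHyp5, ← hA]
    exact Nat.sInf_mem hAne
  by_contra hlt
  push_neg at hlt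
  have hle : RHyp5 q ≤ 16 * q := hlt
  obtain ⟨-, hprop⟩ := hmem
  rcases hprop (fun e => psi q (e.map (Fin.castLEEmb hle))) with
    h | h | h | h | h
  · exact h0 (pull_cme hle (psi q) 0 5 h)
  · exact h1 (pull_mono hle (psi q) 1 5 h)
  · exact h2 (pull_mono hle (psi q) 2 5 h)
  · exact h3 (pull_mono hle (psi q) 3 5 h)
  · exact h4 (pull_cme hle (psi q) 4 (q + 1) h)
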